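/- Let T : H₁ → H₂ be an unbounded, densely defined, closed operator between separable Hilbert spaces with closed range. Then the range of T* ∘ T equals the range of T*, and in particular the range of T* ∘ T is closed in H₁. -/

import Mathlib

namespace Paper

/-- Composition `S ∘ T` of partially defined (unbounded) linear maps, with domain
`{x ∈ dom T | T x ∈ dom S}` and value `S (T x)`. -/
noncomputable def pcomp {R E F G : Type*} [Ring R] [AddCommGroup E] [Module R E]
    [AddCommGroup F] [Module R F] [AddCommGroup G] [Module R G]
    (S : F →ₗ.[R] G) (T : E →ₗ.[R] F) : E →ₗ.[R] G where
  domain := (S.domain.comap T.toFun).map T.domain.subtype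
  toFun :=
    (S.toFun.comp (((T.toFun.comp (S.domain.comap T.toFun).subtype)).codRestrict S.domain
      fun c => c.2)).comp
      (Submodule.equivMapOfInjective T.domain.subtype (Submodule.injective_subtype T.domain)
        (S.domain.comap T.toFun)).symm.toLinearMap
/-- The range (image) of a partially defined linear map. -/
def pran {R E F : Type*} [Ring R] [AddCommGroup E] [Module R E] [AddCommGroup F] [Module R F]
    (T : E →ₗ.[R] F) : Set F :=
  Set.range fun x : T.domain => T x

/-- The kernel of a partially defined linear map, as a subset of the ambient space. -/
def pker {R E F : Type*} [Ring R] [AddCommGroup E] [Module R E] [AddCommGroup F] [Module R F]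
    (T : E →ₗ.[R] F) : Set E :=
  {x | ∃ h : x ∈ T.domain, T ⟨x, h⟩ = 0}

theorem mem_pcomp_domain {R E F G : Type*} [Ring R] [AddCommGroup E] [Module R E]
    [AddCommGroup F] [Module R F] [AddCommGroup G] [Module R G]
    {S : F →ₗ.[R] G} {T : E →ₗ.[R] F} {x : E} :
    x ∈ (pcomp S T).domain ↔ ∃ hx : x ∈ T.domain, T ⟨x, hx⟩ ∈ S.domain := by
  simp only [pcomp, Submodule.mem_map, Submodule.mem_comap]
  constructor
  · rintro ⟨y, hy, rfl⟩
    exact ⟨y.2, hy⟩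
  · rintro ⟨hx, hTx⟩
    exact ⟨⟨x, hx⟩, hTx, rfl⟩

theorem pcomp_apply {R E F G : Type*} [Ring R] [AddCommGroup E] [Module R E]
    [AddCommGroup F] [Module R F] [AddCommGroup G] [Module R G]
    (S : F →ₗ.[R] G) (T : E →ₗ.[R] F) {x : E} (hx : x ∈ T.domain)
    (hTx : T ⟨x, hx⟩ ∈ S.domain) (hm : x ∈ (pcomp S T).domain) :
    pcomp S T ⟨x, hm⟩ = S ⟨T ⟨x, hx⟩, hTx⟩ := by
  set e := Submodule.equivMapOfInjective T.domain.subtype (Submodule.injective_subtype T.domain)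
    (S.domain.comap T.toFun) with he
  set c := e.symm ⟨x, hm⟩ with hc
  have hec : e c = ⟨x, hm⟩ := e.apply_symm_apply _
  have hc1 : ((c : T.domain) : E) = x := congrArg Subtype.val hec
  have hcx : (c : T.domain) = ⟨x, hx⟩ := Subtype.ext hc1
  show S.toFun _ = S.toFun _
  congr 1
  exact Subtype.ext (by simp only [LinearMap.codRestrict_apply, LinearMap.comp_apply,
    Submodule.subtype_apply]; exact congrArg (fun z => T.toFun z) hcx)

local notation "⟪" x ", " y "⟫" => @inner ℂ _ _ x y

open LinearPMap in
/-- If `T : H₁ → H₂` is an unbounded, densely defined, closed operator between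
separable Hilbert spaces with closed range, then `im (T† ∘ T) = im T†`; in particular
`im (T† ∘ T)` is closed in `H₁`. -/
theorem stmt0 {H₁ H₂ : Type*}
    [NormedAddCommGroup H₁] [InnerProductSpace ℂ H₁] [CompleteSpace H₁]
    [TopologicalSpace.SeparableSpace H₁]
    [NormedAddCommGroup H₂] [InnerProductSpace ℂ H₂] [CompleteSpace H₂]
    [TopologicalSpace.SeparableSpace H₂]
    (T : H₁ →ₗ.[ℂ] H₂) (hdense : Dense (T.domain : Set H₁)) (hclosed : T.IsClosed)
    (hran : IsClosed (pran T)) :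
    pran (pcomp T.adjoint T) = pran T.adjoint ∧ IsClosed (pran (pcomp T.adjoint T)) := by
  classical
  set K₂ : Submodule ℂ H₂ := LinearMap.range T.toFun with hK₂def
  have hK₂set : (K₂ : Set H₂) = pran T := by
    ext z
    simp [hK₂def, pran, LinearMap.mem_range, Set.mem_range, eq_comm]
  have hK₂closed : IsClosed (K₂ : Set H₂) := by rw [hK₂set]; exact hran
  haveI : CompleteSpace K₂ := hK₂closed.completeSpace_coe
  set K₁ : Submodule ℂ H₁ := (LinearMap.ker T.toFun).map T.domain.subtype with hK₁def
  -- Step A: `K₂ᗮ` is contained in the kernel of the adjoint.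
  have hperp_mem : ∀ w ∈ K₂ᗮ, w ∈ T.adjoint.domain := by
    intro w hw
    refine mem_adjoint_domain_of_exists _ ⟨0, fun x => ?_⟩
    have h0 : ⟪T x, w⟫ = 0 := hw _ (LinearMap.mem_range_self _ x)
    rw [inner_zero_left, ← inner_conj_symm, h0, _root_.map_zero]
  have hperp_zero : ∀ (w : H₂) (hwD : w ∈ T.adjoint.domain), w ∈ K₂ᗮ →
      T.adjoint ⟨w, hwD⟩ = 0 := by
    intro w hwD hw
    refine adjoint_apply_eq hdense _ (fun x => ?_)
    have h0 : ⟪T x, w⟫ = 0 := hw _ (LinearMap.mem_range_self _ x)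
    rw [inner_zero_left, ← inner_conj_symm, h0, _root_.map_zero]
  -- Step B: equality of ranges.
  have hsub1 : pran (pcomp T.adjoint T) ⊆ pran T.adjoint := by
    rintro _ ⟨⟨x, hm⟩, rfl⟩
    obtain ⟨hx, hTx⟩ := mem_pcomp_domain.mp hm
    exact ⟨⟨T ⟨x, hx⟩, hTx⟩, (pcomp_apply T.adjoint T hx hTx hm).symm⟩
  have hsub2 : pran T.adjoint ⊆ pran (pcomp T.adjoint T) := by
    rintro _ ⟨⟨y, hy⟩, rfl⟩
    obtain ⟨z, hz, w, hw, hyzw⟩ := K₂.exists_add_mem_mem_orthogonal y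
    have hwD : w ∈ T.adjoint.domain := hperp_mem w hw
    have hzD : z ∈ T.adjoint.domain := by
      have hzyw : z = y - w := by rw [hyzw]; abel
      rw [hzyw]; exact Submodule.sub_mem _ hy hwD
    obtain ⟨xz, hxz⟩ := hz
    have hTxz : T ⟨(xz : H₁), xz.2⟩ ∈ T.adjoint.domain := by
      show T.toFun xz ∈ _
      rw [hxz]; exact hzD
    have hmem : (xz : H₁) ∈ (pcomp T.adjoint T).domain :=
      mem_pcomp_domain.mpr ⟨xz.2, hTxz⟩
    refine ⟨⟨xz, hmem⟩, ?_⟩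
    show pcomp T.adjoint T ⟨xz, hmem⟩ = T.adjoint ⟨y, hy⟩
    rw [pcomp_apply T.adjoint T xz.2 hTxz hmem]
    have hy' : (⟨y, hy⟩ : T.adjoint.domain) = ⟨z, hzD⟩ + ⟨w, hwD⟩ := by
      apply Subtype.ext; simp [hyzw]
    rw [hy', T.adjoint.map_add, hperp_zero w hwD hw, add_zero]
    congr 1
    exact Subtype.ext hxz
  -- Step C: the range of the adjoint is `K₁ᗮ`, hence closed.
  have hranset : pran T.adjoint = (K₁ᗮ : Set H₁) := by
    apply Set.Subset.antisymm
    · rintro _ ⟨y, rfl⟩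
      refine Submodule.mem_orthogonal _ _ |>.mpr (fun v hv => ?_)
      obtain ⟨x₀, hx₀, rfl⟩ := hv
      have h1 : ⟪T.adjoint y, (x₀ : H₁)⟫ = ⟪(y : H₂), T x₀⟫ :=
        adjoint_isFormalAdjoint hdense y x₀
      have h2 : T x₀ = 0 := LinearMap.mem_ker.mp hx₀
      have h3 : ⟪T.adjoint y, (x₀ : H₁)⟫ = 0 := by rw [h1, h2, inner_zero_right]
      rw [← inner_conj_symm]
      show (starRingEnd ℂ) ⟪T.adjoint y, (x₀ : H₁)⟫ = 0
      rw [h3, _root_.map_zero]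
    · intro u hu
      haveI : CompleteSpace T.graph := hclosed.completeSpace_coe
      set G := T.graph with hG
      have hmemK₂ : ∀ g : G, (g : H₁ × H₂).2 ∈ K₂ := by
        intro g
        obtain ⟨x, hx1, hx2⟩ := T.mem_graph_iff.mp g.2
        exact ⟨x, hx2⟩
      set f : G →L[ℂ] K₂ := ContinuousLinearMap.codRestrict
        ((ContinuousLinearMap.snd ℂ H₁ H₂).comp G.subtypeL) K₂ hmemK₂ with hf
      have hfsurj : Function.Surjective f := by
        rintro ⟨z, hz⟩
        obtain ⟨xz, hxz⟩ := hz
        refine ⟨⟨((xz : H₁), z), T.mem_graph_iff.mpr ⟨xz, rfl, hxz⟩⟩, ?_⟩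
        exact Subtype.ext rfl
      set φ : G →L[ℂ] ℂ :=
        (innerSL ℂ u).comp ((ContinuousLinearMap.fst ℂ H₁ H₂).comp G.subtypeL) with hφ
      have hker : LinearMap.ker (f : G →ₗ[ℂ] K₂) ≤ LinearMap.ker (φ : G →ₗ[ℂ] ℂ) := by
        intro g hg
        have hg2 : (g : H₁ × H₂).2 = 0 := congrArg Subtype.val hg
        obtain ⟨x, hx1, hx2⟩ := T.mem_graph_iff.mp g.2
        have hxk : T.toFun x = 0 := by show T x = 0; rw [hx2, hg2]
        have hxker : (g : H₁ × H₂).1 ∈ K₁ := ⟨x, LinearMap.mem_ker.mpr hxk, hx1⟩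
        have h0 : ⟪(g : H₁ × H₂).1, u⟫ = 0 := (Submodule.mem_orthogonal _ _).mp hu _ hxker
        show ⟪u, (g : H₁ × H₂).1⟫ = 0
        rw [← inner_conj_symm, h0, _root_.map_zero]
      have hfsurj' : Function.Surjective (f : G →ₗ[ℂ] K₂) := hfsurj
      set e := LinearMap.quotKerEquivOfSurjective (f : G →ₗ[ℂ] K₂) hfsurj' with he
      set ψ : K₂ →ₗ[ℂ] ℂ :=
        ((LinearMap.ker (f : G →ₗ[ℂ] K₂)).liftQ (φ : G →ₗ[ℂ] ℂ) hker).comp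
          (e.symm : K₂ →ₗ[ℂ] _) with hψ
      have hψf : ∀ g : G, ψ (f g) = φ g := by
        intro g
        have h1 : e (Submodule.Quotient.mk g) = f g := rfl
        have h2 : e.symm (f g) = Submodule.Quotient.mk g := by
          rw [← h1, LinearEquiv.symm_apply_apply]
        simp only [hψ, LinearMap.comp_apply, LinearEquiv.coe_coe, h2]
        exact Submodule.liftQ_apply _ _ _
      obtain ⟨C, hC0, hC⟩ := ContinuousLinearMap.exists_preimage_norm_le f hfsurj
      have hψbound : ∀ z : K₂, ‖ψ z‖ ≤ ‖φ‖ * C * ‖z‖ := by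
        intro z
        obtain ⟨g, rfl, hgn⟩ := hC z
        rw [hψf]
        calc ‖φ g‖ ≤ ‖φ‖ * ‖g‖ := φ.le_opNorm g
          _ ≤ ‖φ‖ * (C * ‖f g‖) := mul_le_mul_of_nonneg_left hgn (norm_nonneg φ)
          _ = ‖φ‖ * C * ‖f g‖ := by ring
      set ψc : K₂ →L[ℂ] ℂ := ψ.mkContinuous (‖φ‖ * C) hψbound with hψc
      set ψ' : H₂ →L[ℂ] ℂ := ψc.comp (K₂.orthogonalProjectionOnto : H₂ →L[ℂ] K₂) with hψ'
      set y : H₂ := (InnerProductSpace.toDual ℂ H₂).symm ψ' with hydef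
      have hy : ∀ x : T.domain, ⟪y, T x⟫ = ⟪u, (x : H₁)⟫ := by
        intro x
        have h1 : ⟪y, T x⟫ = ψ' (T x) := InnerProductSpace.toDual_symm_apply
        have hTxm : T x ∈ K₂ := LinearMap.mem_range_self _ x
        have h2 : K₂.orthogonalProjectionOnto (T x) = ⟨T x, hTxm⟩ :=
          Submodule.orthogonalProjectionOnto_mem_subspace_eq_self (⟨T x, hTxm⟩ : K₂)
        set g : G := ⟨((x : H₁), T x), T.mem_graph x⟩ with hg
        have h3 : f g = ⟨T x, hTxm⟩ := Subtype.ext rfl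
        rw [h1]
        show ψc (K₂.orthogonalProjectionOnto (T x)) = _
        rw [h2, ← h3]
        show ψ (f g) = _
        rw [hψf g]
        rfl
      have hyD : y ∈ T.adjoint.domain :=
        mem_adjoint_domain_of_exists _ ⟨u, fun x => (hy x).symm⟩
      exact ⟨⟨y, hyD⟩, adjoint_apply_eq hdense _ (fun x => (hy x).symm)⟩
  have heq : pran (pcomp T.adjoint T) = pran T.adjoint := Set.Subset.antisymm hsub1 hsub2
  refine ⟨heq, ?_⟩
  rw [heq, hranset]
  exact K₁.isClosed_orthogonal

end Paper
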